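/- arXiv:2002.10517 — 7 statements merged into one kernel-verified Lean document; each statement's English description precedes it below -/
import Mathlib

section
/- (Theorem 3ψ, the fundamental Fierz-type identity underlying minimal supersymmetry in dimensions 3, 4, 6, 10.) For all column vectors Q₁, Q₂, Q₃ ∈ A² one has Γ(Q₁,Q₂)·Q₃ + Γ(Q₂,Q₃)·Q₁ + Γ(Q₃,Q₁)·Q₂ = 0 in A², where Γ(Q,Q′) is the 2×2 matrix over A defined below and · denotes matrix–vector multiplication. Equivalently, ρ(Γ(Q₁,Q₂))Q₃ + ρ(Γ(Q₂,Q₃))Q₁ + ρ(Γ(Q₃,Q₁))Q₂ = 0, where ρ(M)Q := M·Q is the Clifford action of the 'vector' M on the spinor Q. -/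
/-!
Statement 0 (Theorem 3ψ): for an alternative complex composition algebra `A` with
anti-involution `σ`, and for all column vectors `Q₁, Q₂, Q₃ ∈ A²`,
`Γ(Q₁,Q₂)·Q₃ + Γ(Q₂,Q₃)·Q₁ + Γ(Q₃,Q₁)·Q₂ = 0`.
-/

namespace Stmt0

variable {A : Type*} [AddCommGroup A] [Module ℂ A]

/-- Matrix–vector multiplication of a 2×2 matrix over `A` with a column vector in `A²`. -/
def act (mul : A → A → A) (M : Fin 2 → Fin 2 → A) (Q : Fin 2 → A) : Fin 2 → A :=
  fun k => mul (M k 0) (Q 0) + mul (M k 1) (Q 1)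

/-- The 2×2 matrix `Q·Q′† + Q′·Q†`, with `(k,l)` entry `q_k * σ(q′_l) + q′_k * σ(q_l)`. -/
def gammaRaw (mul : A → A → A) (σ : A → A) (Q Q' : Fin 2 → A) : Fin 2 → Fin 2 → A :=
  fun k l => mul (Q k) (σ (Q' l)) + mul (Q' k) (σ (Q l))

/-- `M̃ = M − tr(M)·1₂`, where `tr(M) = M₀₀ + M₁₁`. -/
def tilde (M : Fin 2 → Fin 2 → A) : Fin 2 → Fin 2 → A :=
  fun k l => M k l - if k = l then M 0 0 + M 1 1 else 0

/-- The Γ-pairing `Γ(Q,Q′) = (Q·Q′† + Q′·Q†) − tr(Q·Q′† + Q′·Q†)·1₂`. -/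
def Gamma (mul : A → A → A) (σ : A → A) (Q Q' : Fin 2 → A) : Fin 2 → Fin 2 → A :=
  tilde (gammaRaw mul σ Q Q')

theorem three_psi
    (mul : A → A → A) (one : A) (σ : A → A) (Re Nm : A → ℂ)
    -- `mul` is ℂ-bilinear
    (hmul_addl : ∀ x y z : A, mul (x + y) z = mul x z + mul y z)
    (hmul_addr : ∀ x y z : A, mul x (y + z) = mul x y + mul x z)
    (hmul_smull : ∀ (c : ℂ) (x y : A), mul (c • x) y = c • mul x y)
    (hmul_smulr : ∀ (c : ℂ) (x y : A), mul x (c • y) = c • mul x y)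
    -- `one` is a unit
    (hone_mul : ∀ x : A, mul one x = x)
    (hmul_one : ∀ x : A, mul x one = x)
    -- `A` is alternative: the associator is alternating
    (halt_left : ∀ x y : A, mul (mul x x) y = mul x (mul x y))
    (halt_right : ∀ x y : A, mul (mul x y) y = mul x (mul y y))
    (halt_flex : ∀ x y : A, mul (mul x y) x = mul x (mul y x))
    -- `σ` is a ℂ-linear anti-involution
    (hσ_add : ∀ x y : A, σ (x + y) = σ x + σ y)
    (hσ_smul : ∀ (c : ℂ) (x : A), σ (c • x) = c • σ x)
    (hσ_mul : ∀ x y : A, σ (mul x y) = mul (σ y) (σ x))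
    (hσ_invol : ∀ x : A, σ (σ x) = x)
    (hσ_one : σ one = one)
    -- real part and norm scalars
    (hRe : ∀ x : A, x + σ x = (2 * Re x) • one)
    (hNm : ∀ x : A, mul x (σ x) = Nm x • one)
    -- nondegeneracy of the form `(x,y) ↦ Re(x·σ(y))`
    (hnondeg : ∀ x : A, (∀ y : A, Re (mul x (σ y)) = 0) → x = 0)
    (Q₁ Q₂ Q₃ : Fin 2 → A) (k : Fin 2) :
    act mul (Gamma mul σ Q₁ Q₂) Q₃ k + act mul (Gamma mul σ Q₂ Q₃) Q₁ k
      + act mul (Gamma mul σ Q₃ Q₁) Q₂ k = 0 := by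

  -- `mul` respects negation and subtraction (from bilinearity)
  have hmul_negl : ∀ x z : A, mul (-x) z = -(mul x z) := by
    intro x z
    rw [← neg_one_smul ℂ x, hmul_smull, neg_one_smul]
  have hmul_negr : ∀ x z : A, mul x (-z) = -(mul x z) := by
    intro x z
    rw [← neg_one_smul ℂ z, hmul_smulr, neg_one_smul]
  have hmul_subr : ∀ x y z : A, mul x (y - z) = mul x y - mul x z := by
    intro x y z
    rw [sub_eq_add_neg, hmul_addr, hmul_negr, sub_eq_add_neg]
  have hmul_subl : ∀ x y z : A, mul (x - y) z = mul x z - mul y z := by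
    intro x y z
    rw [sub_eq_add_neg, hmul_addl, hmul_negl, sub_eq_add_neg]
  have hmul_zerol : ∀ z : A, mul 0 z = 0 := by
    intro z
    have h := hmul_smull 0 0 z
    rwa [zero_smul, zero_smul] at h
  have hscalar : ∀ (c : ℂ) (z : A), mul (c • one) z = c • z := by
    intro c z; rw [hmul_smull, hone_mul]
  -- linearized norm relation: `u·σv + v·σu` is the scalar `Nm(u+v) - Nm u - Nm v`
  have hs : ∀ u v : A, mul u (σ v) + mul v (σ u)
      = (Nm (u + v) - Nm u - Nm v) • one := by
    intro u v
    have h := hNm (u + v)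
    rw [hσ_add, hmul_addl, hmul_addr, hmul_addr, hNm u, hNm v] at h
    rw [sub_smul, sub_smul, ← h]
    abel
  -- `(x·σc)·c = Nm c • x`
  have hRN : ∀ x c : A, mul (mul x (σ c)) c = Nm c • x := by
    intro x c
    have hc : σ c = (2 * Re c) • one - c := eq_sub_of_add_eq' (hRe c)
    have h1 : mul (mul x (σ c)) c
        = (2 * Re c) • mul x c - mul x (mul c c) := by
      rw [hc, hmul_subr, hmul_smulr, hmul_one, hmul_subl, hmul_smull,
        halt_right]
    have h2 : Nm c • x = (2 * Re c) • mul x c - mul x (mul c c) := by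
      calc Nm c • x = mul x (Nm c • one) := by rw [hmul_smulr, hmul_one]
        _ = mul x (mul c (σ c)) := by rw [hNm]
        _ = mul x ((2 * Re c) • c - mul c c) := by
              rw [hc, hmul_subr, hmul_smulr, hmul_one]
        _ = (2 * Re c) • mul x c - mul x (mul c c) := by
              rw [hmul_subr, hmul_smulr]
    rw [h1, ← h2]
  -- linearization of the previous identity
  have hB : ∀ x v w : A, mul (mul x (σ v)) w + mul (mul x (σ w)) v
      = (Nm (v + w) - Nm v - Nm w) • x := by
    intro x v w
    have h := hRN x (v + w)
    simp only [hσ_add, hmul_addr, hmul_addl] at h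
    rw [hRN x v, hRN x w] at h
    rw [sub_smul, sub_smul, ← h]
    abel
  -- the key componentwise identity
  have key : ∀ x y z u v w : A,
      -mul (mul u (σ v) + mul v (σ u)) z
        + mul (mul x (σ v) + mul y (σ u)) w
        + (-mul (mul v (σ w) + mul w (σ v)) x
          + mul (mul y (σ w) + mul z (σ v)) u)
        + (-mul (mul w (σ u) + mul u (σ w)) y
          + mul (mul z (σ u) + mul x (σ w)) v) = 0 := by
    intro x y z u v w
    have e1 := hB x v w
    have e2 := hB y w u
    have e3 := hB z u v
    rw [hs u v, hs v w, hs w u, hscalar, hscalar, hscalar,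
      hmul_addl (mul x (σ v)) (mul y (σ u)) w,
      hmul_addl (mul y (σ w)) (mul z (σ v)) u,
      hmul_addl (mul z (σ u)) (mul x (σ w)) v,
      ← e1, ← e2, ← e3]
    abel
  have red : ∀ a b c : A, a - (a + b) = -b := by intro a b c; abel
  fin_cases k
  · have h := key (Q₁ 0) (Q₂ 0) (Q₃ 0) (Q₁ 1) (Q₂ 1) (Q₃ 1)
    simp only [act, Gamma, tilde, gammaRaw, Fin.mk_zero, Fin.mk_one, Fin.isValue,
      reduceIte, show ((0 : Fin 2) = 1) = False from by decide,
      show ((1 : Fin 2) = 0) = False from by decide, if_false, sub_zero,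
      hmul_subl, hmul_addl, hmul_negl, hmul_zerol] at h ⊢
    abel_nf at h ⊢
    exact h
  · have h := key (Q₁ 1) (Q₂ 1) (Q₃ 1) (Q₁ 0) (Q₂ 0) (Q₃ 0)
    simp only [act, Gamma, tilde, gammaRaw, Fin.mk_zero, Fin.mk_one, Fin.isValue,
      reduceIte, show ((0 : Fin 2) = 1) = False from by decide,
      show ((1 : Fin 2) = 0) = False from by decide, if_false, sub_zero,
      hmul_subl, hmul_addl, hmul_negl, hmul_zerol] at h ⊢
    abel_nf at h ⊢
    exact h


end Stmt0
end

section
/- (Theorem 3ψ, 3-dimensional N=1 instance.) For all Q₁, Q₂, Q₃ ∈ ℂ²: Γ(Q₁,Q₂)·Q₃ + Γ(Q₂,Q₃)·Q₁ + Γ(Q₃,Q₁)·Q₂ = 0 in ℂ². -/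
/-!
Statement 1 (Theorem 3ψ, 3-dimensional N=1 instance): for all `Q₁, Q₂, Q₃ ∈ ℂ²`,
`Γ(Q₁,Q₂)·Q₃ + Γ(Q₂,Q₃)·Q₁ + Γ(Q₃,Q₁)·Q₂ = 0` in `ℂ²`, where
`Γ(Q,Q′) = (Q·Q′ᵀ + Q′·Qᵀ) − tr(Q·Q′ᵀ + Q′·Qᵀ)·1₂`.
-/

namespace Stmt1

open Matrix

/-- The Γ-pairing of the 3d N=1 supersymmetry algebra in the division-algebra model. -/
noncomputable def Gamma (Q Q' : Fin 2 → ℂ) : Matrix (Fin 2) (Fin 2) ℂ :=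
  (vecMulVec Q Q' + vecMulVec Q' Q)
    - (Matrix.trace (vecMulVec Q Q' + vecMulVec Q' Q)) • (1 : Matrix (Fin 2) (Fin 2) ℂ)

theorem three_psi_3d (Q₁ Q₂ Q₃ : Fin 2 → ℂ) :
    Gamma Q₁ Q₂ *ᵥ Q₃ + Gamma Q₂ Q₃ *ᵥ Q₁ + Gamma Q₃ Q₁ *ᵥ Q₂ = 0 := by
  funext i
  fin_cases i <;>
    simp [Gamma, mulVec, dotProduct, vecMulVec, Matrix.trace, Matrix.diag, Fin.sum_univ_two,
      Matrix.one_apply] <;> ring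

end Stmt1
end

section
/- (Theorem 3ψ, 4-dimensional N=1 instance.) For all P₁, P₂, P₃, R₁, R₂, R₃ ∈ ℂ²: tilde(P₁·R₂ᵀ + P₂·R₁ᵀ)·P₃ + tilde(P₂·R₃ᵀ + P₃·R₂ᵀ)·P₁ + tilde(P₃·R₁ᵀ + P₁·R₃ᵀ)·P₂ = 0 in ℂ². -/
/-!
Statement 2 (Theorem 3ψ, 4-dimensional N=1 instance): for all
`P₁, P₂, P₃, R₁, R₂, R₃ ∈ ℂ²`,
`tilde(P₁·R₂ᵀ + P₂·R₁ᵀ)·P₃ + tilde(P₂·R₃ᵀ + P₃·R₂ᵀ)·P₁ + tilde(P₃·R₁ᵀ + P₁·R₃ᵀ)·P₂ = 0`,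
where `tilde(M) = M − tr(M)·1₂`.
-/

namespace Stmt2

open Matrix

/-- `tilde(M) = M − tr(M)·1₂`. -/
noncomputable def tilde (M : Matrix (Fin 2) (Fin 2) ℂ) : Matrix (Fin 2) (Fin 2) ℂ :=
  M - (Matrix.trace M) • (1 : Matrix (Fin 2) (Fin 2) ℂ)

theorem three_psi_4d (P₁ P₂ P₃ R₁ R₂ R₃ : Fin 2 → ℂ) :
    tilde (vecMulVec P₁ R₂ + vecMulVec P₂ R₁) *ᵥ P₃
      + tilde (vecMulVec P₂ R₃ + vecMulVec P₃ R₂) *ᵥ P₁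
      + tilde (vecMulVec P₃ R₁ + vecMulVec P₁ R₃) *ᵥ P₂ = 0 := by
  funext i
  simp only [tilde, mulVec, dotProduct, Matrix.sub_apply, Matrix.add_apply,
    vecMulVec_apply, Matrix.smul_apply, Matrix.one_apply, Matrix.trace_fin_two,
    Pi.add_apply, Pi.zero_apply, smul_eq_mul, Fin.sum_univ_two]
  fin_cases i <;> simp <;> ring

end Stmt2
end

section
/- (Classification of rank (2,2) square-zero supercharges in the 4d N=4 supersymmetry algebra by the invariant s ∈ ℂ×.) Let (A,B) be a pair of complex 4×2 matrices with rank A = 2, rank B = 2 and BᵀA = 0. Then: (i) there exists a complex 4×2 matrix D with BᵀD = 1₂, and the scalar s(A,B) := det of the 4×4 complex matrix whose first two columns are the columns of A and whose last two columns are the columns of D is independent of the choice of such D and is nonzero; (ii) two such pairs (A,B) and (A′,B′) lie in the same orbit of the action of SL(4,ℂ) given by g·(A,B) := (g·A, (gᵀ)⁻¹·B) if and only if s(A,B) = s(A′,B′). In particular, the Spin(6,ℂ) ≅ SL(4,ℂ) orbits of rank (2,2) square-zero supercharges are parameterized by the invariant s ∈ ℂ×. -/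
/-!
Statement 7: classification of rank (2,2) square-zero supercharges in the 4d N=4
supersymmetry algebra by the invariant `s ∈ ℂ×`.
-/

namespace Stmt7

open Matrix

/-- A rank `(2,2)` square-zero supercharge: a pair `(A,B)` of complex 4×2 matrices
with `rank A = 2`, `rank B = 2` and `Bᵀ·A = 0`. -/
def IsRank22 (A B : Matrix (Fin 4) (Fin 2) ℂ) : Prop :=
  A.rank = 2 ∧ B.rank = 2 ∧ Bᵀ * A = 0

/-- Determinant of the 4×4 matrix whose first two columns are the columns of `A` and
whose last two columns are the columns of `D`. -/
noncomputable def sVal (A D : Matrix (Fin 4) (Fin 2) ℂ) : ℂ :=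
  ((fromCols A D).submatrix id finSumFinEquiv.symm).det

open scoped Classical in
/-- The invariant `s(A,B)`, computed using a choice of `D` with `Bᵀ·D = 1₂`. -/
noncomputable def sInv (A B : Matrix (Fin 4) (Fin 2) ℂ) : ℂ :=
  if h : ∃ D : Matrix (Fin 4) (Fin 2) ℂ, Bᵀ * D = 1 then sVal A h.choose else 0

/-- The `SL(4,ℂ)`-action: `g·(A,B) = (g·A, (gᵀ)⁻¹·B)`; two pairs lie in the same orbit. -/
def SameOrbit (A B A' B' : Matrix (Fin 4) (Fin 2) ℂ) : Prop :=
  ∃ g : Matrix (Fin 4) (Fin 4) ℂ, g.det = 1 ∧ A' = g * A ∧ B' = (gᵀ)⁻¹ * B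

/-- The sum-to-fin equivalence at `2+2 = 4`. -/
def e4 : Fin 2 ⊕ Fin 2 ≃ Fin 4 := finSumFinEquiv

/-- The big square matrix `[A | D]` over `Fin 4`. -/
noncomputable def bigS (A D : Matrix (Fin 4) (Fin 2) ℂ) : Matrix (Fin 4) (Fin 4) ℂ :=
  (fromCols A D).submatrix id e4.symm

lemma fromColumns_eq_bigS (A D : Matrix (Fin 4) (Fin 2) ℂ) :
    fromCols A D = (bigS A D).submatrix id ⇑e4 := by
  ext i j
  simp [bigS]

lemma mul_submatrix_id {l m n o : Type*} [Fintype m] (C : Matrix l m ℂ) (M : Matrix m n ℂ)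
    (f : o → n) : C * M.submatrix id f = (C * M).submatrix id f := by
  ext i j
  simp [Matrix.mul_apply]

lemma mulVec_injective_of_rank {A : Matrix (Fin 4) (Fin 2) ℂ} (h : A.rank = 2) :
    Function.Injective A.mulVec := by
  have hk : LinearMap.ker A.mulVecLin = ⊥ := by
    have h1 := A.mulVecLin.finrank_range_add_finrank_ker
    rw [Matrix.rank] at h
    rw [h] at h1
    simp only [Module.finrank_fintype_fun_eq_card, Fintype.card_fin] at h1
    exact Submodule.finrank_eq_zero.mp (by omega)
  intro x y hxy
  exact LinearMap.ker_eq_bot.mp hk (by rw [Matrix.mulVecLin_apply, Matrix.mulVecLin_apply]; exact hxy)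

lemma mulVec_surjective_of_rank {B : Matrix (Fin 4) (Fin 2) ℂ} (h : B.rank = 2) :
    Function.Surjective Bᵀ.mulVec := by
  have hr : Bᵀ.rank = 2 := by rw [Matrix.rank_transpose]; exact h
  have htop : LinearMap.range Bᵀ.mulVecLin = ⊤ := by
    apply Submodule.eq_top_of_finrank_eq
    rw [← Matrix.rank, hr]
    simp
  intro y
  obtain ⟨x, hx⟩ := LinearMap.range_eq_top.mp htop y
  exact ⟨x, by rw [← Matrix.mulVecLin_apply]; exact hx⟩

lemma exists_right_inverse {B : Matrix (Fin 4) (Fin 2) ℂ} (h : B.rank = 2) :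
    ∃ D : Matrix (Fin 4) (Fin 2) ℂ, Bᵀ * D = 1 := by
  have hs := mulVec_surjective_of_rank h
  choose v hv using fun j : Fin 2 => hs (Pi.single j 1)
  refine ⟨Matrix.of fun i j => v j i, ?_⟩
  ext i j
  have := congrFun (hv j) i
  simpa [Matrix.mul_apply, Matrix.mulVec, dotProduct, Matrix.one_apply,
    Pi.single_apply] using this

lemma det_bigS_ne_zero {A B D : Matrix (Fin 4) (Fin 2) ℂ}
    (hA : Function.Injective A.mulVec) (hBA : Bᵀ * A = 0) (hBD : Bᵀ * D = 1) :
    (bigS A D).det ≠ 0 := by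
  intro hdet
  obtain ⟨v, hv, hv0⟩ := Matrix.exists_mulVec_eq_zero_iff.mpr hdet
  have hS : bigS A D *ᵥ v = fromCols A D *ᵥ (v ∘ ⇑e4) := by
    rw [bigS, Matrix.submatrix_mulVec_equiv]
    rfl
  set w := v ∘ ⇑e4 with hw
  have hsum : fromCols A D *ᵥ Sum.elim (w ∘ Sum.inl) (w ∘ Sum.inr) = 0 := by
    rw [Sum.elim_comp_inl_inr, ← hS, hv0]
  rw [fromCols_mulVec_sumElim] at hsum
  have hy : (w ∘ Sum.inr) = 0 := by
    have := congrArg (Bᵀ.mulVec) hsum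
    simpa [Matrix.mulVec_add, Matrix.mulVec_mulVec, hBA, hBD] using this
  have hx : (w ∘ Sum.inl) = 0 := by
    apply hA
    rw [Matrix.mulVec_zero]
    rw [hy, Matrix.mulVec_zero, add_zero] at hsum
    exact hsum
  apply hv
  funext i
  have : w (e4.symm i) = 0 := by
    rcases hsw : e4.symm i with a | a
    · exact congrFun hx a
    · exact congrFun hy a
  simpa [hw] using this

lemma sVal_eq_det (A D : Matrix (Fin 4) (Fin 2) ℂ) : sVal A D = (bigS A D).det := rfl

lemma Bt_mul_bigS {A B D : Matrix (Fin 4) (Fin 2) ℂ} (hBA : Bᵀ * A = 0) (hBD : Bᵀ * D = 1) :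
    Bᵀ * bigS A D = (fromCols (0 : Matrix (Fin 2) (Fin 2) ℂ) 1).submatrix id ⇑e4.symm := by
  rw [bigS, mul_submatrix_id, mul_fromCols, hBA, hBD]

lemma sVal_indep {A B D D' : Matrix (Fin 4) (Fin 2) ℂ} (hA : A.rank = 2) (hBA : Bᵀ * A = 0)
    (hBD : Bᵀ * D = 1) (hBD' : Bᵀ * D' = 1) : sVal A D' = sVal A D := by
  have hAi := mulVec_injective_of_rank hA
  have hdet := det_bigS_ne_zero hAi hBA hBD
  have hu : IsUnit (bigS A D).det := isUnit_iff_ne_zero.mpr hdet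
  set S := bigS A D with hS
  set K : Matrix (Fin 2 ⊕ Fin 2) (Fin 2) ℂ := (S⁻¹ * D').submatrix ⇑e4 id with hK
  have hNK : fromCols A D * K = D' := by
    rw [fromColumns_eq_bigS, hK, Matrix.submatrix_mul_equiv, ← Matrix.mul_assoc,
      Matrix.mul_nonsing_inv _ hu, Matrix.one_mul, Matrix.submatrix_id_id]
  have hD' : D' = A * K.toRows₁ + D * K.toRows₂ := by
    calc D' = fromCols A D * K := hNK.symm
      _ = fromCols A D * fromRows K.toRows₁ K.toRows₂ := by rw [fromRows_toRows]
      _ = A * K.toRows₁ + D * K.toRows₂ := fromCols_mul_fromRows _ _ _ _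
  have hK2 : K.toRows₂ = 1 := by
    have h2 := congrArg (fun X => Bᵀ * X) hD'
    simp only [Matrix.mul_add, ← Matrix.mul_assoc, hBA, hBD, hBD', Matrix.zero_mul,
      Matrix.one_mul, zero_add] at h2
    exact h2.symm
  have hcol : fromCols A D' =
      fromCols A D * fromBlocks (1 : Matrix (Fin 2) (Fin 2) ℂ) K.toRows₁ (0 : Matrix (Fin 2) (Fin 2) ℂ) 1 := by
    rw [fromCols_mul_fromBlocks, hD', hK2]
    simp
  set T := fromBlocks (1 : Matrix (Fin 2) (Fin 2) ℂ) K.toRows₁ (0 : Matrix (Fin 2) (Fin 2) ℂ) 1 with hT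
  set T' := T.submatrix ⇑e4.symm ⇑e4.symm with hT'
  have hTT : T = T'.submatrix ⇑e4 ⇑e4 := by
    ext i j; simp [hT']
  have hbig : bigS A D' = S * T' := by
    rw [bigS, hcol, fromColumns_eq_bigS A D, hTT, Matrix.submatrix_mul_equiv, hS]
    ext i j; simp [bigS]
  have hdetT' : T'.det = 1 := by
    rw [hT', Matrix.det_submatrix_equiv_self, hT, Matrix.det_fromBlocks_zero₂₁]
    simp
  rw [sVal_eq_det, sVal_eq_det, hbig, Matrix.det_mul, hdetT', mul_one]

lemma sVal_smul (g : Matrix (Fin 4) (Fin 4) ℂ) (A D : Matrix (Fin 4) (Fin 2) ℂ) :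
    sVal (g * A) (g * D) = g.det * sVal A D := by
  have : bigS (g * A) (g * D) = g * bigS A D := by
    rw [bigS, bigS, ← mul_fromCols, mul_submatrix_id]
  rw [sVal_eq_det, sVal_eq_det, this, Matrix.det_mul]

lemma sInv_eq {A B D : Matrix (Fin 4) (Fin 2) ℂ} (h : IsRank22 A B) (hD : Bᵀ * D = 1) :
    sInv A B = sVal A D := by
  obtain ⟨hA, hB, hBA⟩ := h
  have hex : ∃ D : Matrix (Fin 4) (Fin 2) ℂ, Bᵀ * D = 1 := ⟨D, hD⟩
  rw [sInv, dif_pos hex]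
  exact sVal_indep hA hBA hD hex.choose_spec

lemma sInv_ne_zero {A B : Matrix (Fin 4) (Fin 2) ℂ} (h : IsRank22 A B) : sInv A B ≠ 0 := by
  obtain ⟨D, hD⟩ := exists_right_inverse h.2.1
  rw [sInv_eq h hD, sVal_eq_det]
  exact det_bigS_ne_zero (mulVec_injective_of_rank h.1) h.2.2 hD


theorem rank22_classification :
    -- (i) existence of `D`, independence of the invariant from the choice of `D`, nonvanishing
    (∀ A B : Matrix (Fin 4) (Fin 2) ℂ, IsRank22 A B →
      (∃ D : Matrix (Fin 4) (Fin 2) ℂ, Bᵀ * D = 1) ∧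
      (∀ D : Matrix (Fin 4) (Fin 2) ℂ, Bᵀ * D = 1 → sVal A D = sInv A B) ∧
      sInv A B ≠ 0) ∧
    -- (ii) two pairs lie in the same `SL(4,ℂ)`-orbit iff they have the same invariant
    (∀ A B A' B' : Matrix (Fin 4) (Fin 2) ℂ, IsRank22 A B → IsRank22 A' B' →
      (SameOrbit A B A' B' ↔ sInv A B = sInv A' B')) := by
  constructor
  · intro A B h
    exact ⟨exists_right_inverse h.2.1, fun D hD => (sInv_eq h hD).symm, sInv_ne_zero h⟩
  · intro A B A' B' h h'
    obtain ⟨D, hD⟩ := exists_right_inverse h.2.1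
    obtain ⟨D', hD'⟩ := exists_right_inverse h'.2.1
    constructor
    · rintro ⟨g, hg, rfl, rfl⟩
      have hgu : IsUnit g.det := by rw [hg]; exact isUnit_one
      have hBt : ((gᵀ)⁻¹ * B)ᵀ = Bᵀ * g⁻¹ := by
        rw [Matrix.transpose_mul, Matrix.transpose_nonsing_inv, Matrix.transpose_transpose]
      have hD2 : ((gᵀ)⁻¹ * B)ᵀ * (g * D) = 1 := by
        rw [hBt, Matrix.mul_assoc Bᵀ g⁻¹, ← Matrix.mul_assoc g⁻¹ g D,
          Matrix.nonsing_inv_mul _ hgu, Matrix.one_mul, hD]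
      rw [sInv_eq h hD, sInv_eq h' hD2, sVal_smul, hg, one_mul]
    · intro hs
      obtain ⟨hA, hB, hBA⟩ := h
      obtain ⟨hA', hB', hBA'⟩ := h'
      set S := bigS A D with hSdef
      set S' := bigS A' D' with hS'def
      have hs1 : sInv A B = S.det := by rw [sInv_eq ⟨hA, hB, hBA⟩ hD, sVal_eq_det]
      have hs2 : sInv A' B' = S'.det := by rw [sInv_eq ⟨hA', hB', hBA'⟩ hD', sVal_eq_det]
      have hne : S.det ≠ 0 := by rw [← hs1]; exact sInv_ne_zero ⟨hA, hB, hBA⟩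
      have hu : IsUnit S.det := isUnit_iff_ne_zero.mpr hne
      have hdets : S'.det = S.det := by rw [← hs1, ← hs2, hs]
      refine ⟨S' * S⁻¹, ?_, ?_, ?_⟩
      · rw [Matrix.det_mul, Matrix.det_nonsing_inv, Ring.inverse_eq_inv', hdets,
          mul_inv_cancel₀ hne]
      · have hgS : S' * S⁻¹ * S = S' := by
          rw [Matrix.mul_assoc, Matrix.nonsing_inv_mul _ hu, Matrix.mul_one]
        have hcols : fromCols (S' * S⁻¹ * A) (S' * S⁻¹ * D) = fromCols A' D' := by
          rw [← mul_fromCols, fromColumns_eq_bigS A D, ← hSdef, mul_submatrix_id, hgS,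
            hS'def, ← fromColumns_eq_bigS]
        have := congrArg Matrix.toCols₁ hcols
        simpa [toCols₁_fromCols] using this.symm
      · have hgS : S' * S⁻¹ * S = S' := by
          rw [Matrix.mul_assoc, Matrix.nonsing_inv_mul _ hu, Matrix.mul_one]
        have h1 := Bt_mul_bigS hBA hD
        have h2 := Bt_mul_bigS hBA' hD'
        have h3 : B'ᵀ * (S' * S⁻¹) * S = Bᵀ * S := by
          rw [Matrix.mul_assoc, hgS, hS'def, hSdef, h2, h1]
        have h4 : B'ᵀ * (S' * S⁻¹) = Bᵀ := by
          have h5 : B'ᵀ * (S' * S⁻¹) * S * S⁻¹ = Bᵀ * S * S⁻¹ := by rw [h3]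
          rwa [Matrix.mul_assoc (B'ᵀ * (S' * S⁻¹)) S S⁻¹, Matrix.mul_nonsing_inv _ hu,
            Matrix.mul_one, Matrix.mul_assoc Bᵀ S S⁻¹, Matrix.mul_nonsing_inv _ hu,
            Matrix.mul_one] at h5
        have h6 : (S' * S⁻¹)ᵀ * B' = B := by
          have := congrArg Matrix.transpose h4
          simpa [Matrix.transpose_mul] using this
        have hgT : IsUnit ((S' * S⁻¹)ᵀ).det := by
          rw [Matrix.det_transpose, Matrix.det_mul, Matrix.det_nonsing_inv,
            Ring.inverse_eq_inv', hdets, mul_inv_cancel₀ hne]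
          exact isUnit_one
        rw [← h6, ← Matrix.mul_assoc, Matrix.nonsing_inv_mul _ hgT, Matrix.one_mul]

end Stmt7
end

section
/- (In the 6d N=(1,0) supersymmetry algebra, a supercharge squares to zero if and only if it has rank at most 1.) For q₀, q₁ ∈ M₂(ℂ): one has det(q₀) = 0, det(q₁) = 0, q₀·adj(q₁) = 0 and q₁·adj(q₀) = 0 if and only if the 4×2 complex matrix obtained by stacking q₀ on top of q₁ has rank ≤ 1. Hence a nonzero supercharge in the 6d N=(1,0) supersymmetry algebra squares to zero if and only if it has rank 1 as an element of S₊⊗W₊. -/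
/-!
Statement 12: in the 6d N=(1,0) supersymmetry algebra, a supercharge `Q = (q₀,q₁) ∈ A²`
(`A = M₂(ℂ)`) squares to zero, i.e. `det q₀ = det q₁ = 0`, `q₀·adj(q₁) = 0` and
`q₁·adj(q₀) = 0`, if and only if the stacked 4×2 matrix `[q₀; q₁]` has rank ≤ 1.
-/

namespace Stmt12

open Matrix

/-- The adjugate of a 2×2 complex matrix: `adj(x) = tr(x)·1₂ − x`. -/
noncomputable def adj (x : Matrix (Fin 2) (Fin 2) ℂ) : Matrix (Fin 2) (Fin 2) ℂ :=
  (Matrix.trace x) • (1 : Matrix (Fin 2) (Fin 2) ℂ) - x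

lemma rank_le_one_iff' {m : Type*} [Fintype m] (M : Matrix m (Fin 2) ℂ) :
    M.rank ≤ 1 ↔ ∀ i j, M i 0 * M j 1 = M i 1 * M j 0 := by
  rw [rank_eq_finrank_span_row]
  constructor
  · intro h i j
    obtain ⟨v, hv⟩ := finrank_le_one_iff.mp h
    obtain ⟨c, hc⟩ := hv ⟨M i, Submodule.subset_span ⟨i, rfl⟩⟩
    obtain ⟨d, hd⟩ := hv ⟨M j, Submodule.subset_span ⟨j, rfl⟩⟩
    have hc' : M i = c • (v : Fin 2 → ℂ) := by
      have := congrArg Subtype.val hc; exact this.symm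
    have hd' : M j = d • (v : Fin 2 → ℂ) := by
      have := congrArg Subtype.val hd; exact this.symm
    simp only [hc', hd', Pi.smul_apply, smul_eq_mul]
    ring
  · intro h
    by_cases hM : M = 0
    · subst hM
      have : Submodule.span ℂ (Set.range (0 : Matrix m (Fin 2) ℂ)) = ⊥ := by
        rw [← le_bot_iff, Submodule.span_le]
        rintro _ ⟨i, rfl⟩
        exact Submodule.zero_mem ⊥
      erw [this]
      simp
    · obtain ⟨i₀, hi₀⟩ : ∃ i₀, M i₀ ≠ 0 := by
        by_contra hc
        push_neg at hc
        exact hM (by ext i j; simp [hc i])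
      obtain ⟨j₀, hj₀⟩ : ∃ j₀, M i₀ j₀ ≠ 0 := by
        by_contra hc
        push_neg at hc
        exact hi₀ (funext hc)
      have key : ∀ i, M i = (M i j₀ / M i₀ j₀) • M i₀ := by
        intro i
        funext j
        have hmin : M i j * M i₀ j₀ = M i j₀ * M i₀ j := by
          fin_cases j <;> fin_cases j₀ <;>
            first
              | ring1
              | exact h i i₀
              | exact (h i i₀).symm
        simp only [Pi.smul_apply, smul_eq_mul]
        field_simp
        linear_combination hmin
      have hle : Submodule.span ℂ (Set.range M) ≤ Submodule.span ℂ {M i₀} := by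
        rw [Submodule.span_le]
        rintro _ ⟨i, rfl⟩
        rw [key i]
        exact Submodule.smul_mem _ _ (Submodule.subset_span rfl)
      calc Module.finrank ℂ (Submodule.span ℂ (Set.range M))
          ≤ Module.finrank ℂ (Submodule.span ℂ ({M i₀} : Set (Fin 2 → ℂ))) :=
            Submodule.finrank_mono hle
        _ ≤ 1 := le_of_eq (finrank_span_singleton hi₀)


lemma adj_eq (x : Matrix (Fin 2) (Fin 2) ℂ) :
    adj x = !![x 1 1, -(x 0 1); -(x 1 0), x 0 0] := by
  ext i j
  fin_cases i <;> fin_cases j <;>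
    simp [adj, Matrix.trace_fin_two, Matrix.one_apply]

lemma mul_adj_eq_zero_iff (x y : Matrix (Fin 2) (Fin 2) ℂ) :
    x * adj y = 0 ↔ ∀ a b : Fin 2, x a 0 * y b 1 = x a 1 * y b 0 := by
  rw [adj_eq, ← Matrix.ext_iff]
  constructor
  · intro h a b
    have h0 := h a 0
    have h1 := h a 1
    simp [Matrix.mul_apply, Fin.sum_univ_two] at h0 h1
    fin_cases b <;> simp only [Fin.mk_zero, Fin.mk_one]
    · linear_combination -h1
    · linear_combination h0
  · intro h a b
    have h0 := h a 0
    have h1 := h a 1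
    fin_cases b <;>
      simp [Matrix.mul_apply, Fin.sum_univ_two] <;>
      [linear_combination h1; linear_combination -h0]

theorem squareZero_6d (q₀ q₁ : Matrix (Fin 2) (Fin 2) ℂ) :
    (q₀.det = 0 ∧ q₁.det = 0 ∧ q₀ * adj q₁ = 0 ∧ q₁ * adj q₀ = 0) ↔
      (fromRows q₀ q₁).rank ≤ 1 := by
  rw [rank_le_one_iff', Matrix.det_fin_two, Matrix.det_fin_two,
    mul_adj_eq_zero_iff, mul_adj_eq_zero_iff]
  constructor
  · rintro ⟨h0, h1, h01, h10⟩ i j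
    rcases i with i | i <;> rcases j with j | j <;>
      simp only [fromRows_apply_inl, fromRows_apply_inr]
    · fin_cases i <;> fin_cases j <;> simp only [Fin.mk_zero, Fin.mk_one] <;>
        first
          | ring1
          | linear_combination h0
          | linear_combination -h0
    · exact h01 i j
    · exact h10 i j
    · fin_cases i <;> fin_cases j <;> simp only [Fin.mk_zero, Fin.mk_one] <;>
        first
          | ring1
          | linear_combination h1
          | linear_combination -h1
  · intro h
    refine ⟨?_, ?_, fun a b => ?_, fun a b => ?_⟩
    · have := h (Sum.inl 0) (Sum.inl 1)
      simp only [fromRows_apply_inl] at this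
      linear_combination this
    · have := h (Sum.inr 0) (Sum.inr 1)
      simp only [fromRows_apply_inr] at this
      linear_combination this
    · exact h (Sum.inl a) (Sum.inr b)
    · exact h (Sum.inr a) (Sum.inl b)

end Stmt12
end

section
/- (The 3d N=1 supersymmetry algebra admits no nonzero square-zero supercharges.) If Q ∈ ℂ² satisfies Q·Qᵀ = (Q⬝Q)·1₂, then Q = 0. -/
/-!
Statement 13 (the 3d N=1 supersymmetry algebra has no nonzero square-zero
supercharges): if `Q ∈ ℂ²` satisfies `Q·Qᵀ = (Q⬝Q)·1₂`, then `Q = 0`.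
-/

namespace Stmt13

open Matrix

theorem no_squareZero_3d_N1 (Q : Fin 2 → ℂ)
    (h : vecMulVec Q Q = (Q ⬝ᵥ Q) • (1 : Matrix (Fin 2) (Fin 2) ℂ)) : Q = 0 := by
  have h00 := congrFun (congrFun h 0) 0
  have h11 := congrFun (congrFun h 1) 1
  simp [vecMulVec_apply, dotProduct, Fin.sum_univ_two, Matrix.one_apply] at h00 h11
  funext i
  fin_cases i <;> simp [h00, h11]

end Stmt13
end

section
/- (Compatibility of the Γ-pairing with the action of two-forms on spinors.) For all v₁, v₂ ∈ V and Q₁, Q₂ ∈ M, setting X := ι(v₁)·ι(v₂) − B(v₁,v₂)·1 ∈ Cl(V): Γ(Q₁, X•Q₂) + Γ(Q₂, X•Q₁) = −2·( B(Γ(Q₁,Q₂), v₁)·v₂ − B(Γ(Q₁,Q₂), v₂)·v₁ ). (This is the identity Γ(Q₁, ρ(X)Q₂) + Γ(Q₂, ρ(X)Q₁) = −2·ι_{Γ(Q₁,Q₂)}X for the two-form X = v₁∧v₂, where ∧²V acts on spinors through the quantization map q(v₁∧v₂) = v₁v₂ − (v₁,v₂) and ι_w(v₁∧v₂) := B(w,v₁)v₂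 − B(w,v₂)v₁.) -/
/-!
Statement 14 (compatibility of the Γ-pairing with the action of two-forms on spinors):
for a Clifford module `M` over `Cl(V)` with pairing `φ` and Γ-pairing `Γ`, and for
`X = ι(v₁)ι(v₂) − B(v₁,v₂)·1`:
`Γ(Q₁, X•Q₂) + Γ(Q₂, X•Q₁) = −2·(B(Γ(Q₁,Q₂),v₁)·v₂ − B(Γ(Q₁,Q₂),v₂)·v₁)`.
-/

namespace Stmt14

open CliffordAlgebra

/-- The quadratic form `v ↦ B(v,v)` associated to a bilinear form `B`. -/
noncomputable def qf {V : Type*} [AddCommGroup V] [Module ℂ V]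
    (B : V →ₗ[ℂ] V →ₗ[ℂ] ℂ) : QuadraticForm ℂ V :=
  LinearMap.BilinMap.toQuadraticMap B

theorem gamma_two_form
    {V : Type*} [AddCommGroup V] [Module ℂ V] [FiniteDimensional ℂ V]
    (B : V →ₗ[ℂ] V →ₗ[ℂ] ℂ)
    (hB_symm : ∀ v w : V, B v w = B w v)
    (hB_nondeg : ∀ v : V, (∀ w : V, B v w = 0) → v = 0)
    -- `M` is a module over the Clifford algebra of `(V, v ↦ B(v,v))`
    {M : Type*} [AddCommGroup M] [Module ℂ M]
    [Module (CliffordAlgebra (qf B)) M]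
    [IsScalarTower ℂ (CliffordAlgebra (qf B)) M]
    -- the pairing `φ` is ℂ-bilinear and compatible with the Clifford action
    (φ : M → M → ℂ)
    (hφ_addl : ∀ m m' n : M, φ (m + m') n = φ m n + φ m' n)
    (hφ_addr : ∀ m n n' : M, φ m (n + n') = φ m n + φ m n')
    (hφ_smull : ∀ (c : ℂ) (m n : M), φ (c • m) n = c * φ m n)
    (hφ_smulr : ∀ (c : ℂ) (m n : M), φ m (c • n) = c * φ m n)
    (hφ_move : ∀ (v : V) (m m' : M),
      φ (ι (qf B) v • m) m' = φ m (ι (qf B) v • m'))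
    (hφ_symm : ∀ (v : V) (m m' : M),
      φ (ι (qf B) v • m) m' = φ (ι (qf B) v • m') m)
    -- the Γ-pairing is ℂ-bilinear and dual to the Clifford action via `B`
    (Γ : M → M → V)
    (hΓ_addl : ∀ m m' n : M, Γ (m + m') n = Γ m n + Γ m' n)
    (hΓ_addr : ∀ m n n' : M, Γ m (n + n') = Γ m n + Γ m n')
    (hΓ_smull : ∀ (c : ℂ) (m n : M), Γ (c • m) n = c • Γ m n)
    (hΓ_smulr : ∀ (c : ℂ) (m n : M), Γ m (c • n) = c • Γ m n)
    (hΓ_def : ∀ (v : V) (m m' : M), B v (Γ m m') = φ (ι (qf B) v • m) m')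
    (v₁ v₂ : V) (Q₁ Q₂ : M) :
    Γ Q₁ ((ι (qf B) v₁ * ι (qf B) v₂
        - algebraMap ℂ (CliffordAlgebra (qf B)) (B v₁ v₂)) • Q₂)
      + Γ Q₂ ((ι (qf B) v₁ * ι (qf B) v₂
        - algebraMap ℂ (CliffordAlgebra (qf B)) (B v₁ v₂)) • Q₁)
      = (-2 : ℂ) • (B (Γ Q₁ Q₂) v₁ • v₂ - B (Γ Q₁ Q₂) v₂ • v₁) := by
  set G := Γ Q₁ Q₂ with hG
  have hφ_subr : ∀ m n n' : M, φ m (n - n') = φ m n - φ m n' := by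
    intro m n n'
    have h : n - n' = n + (-1 : ℂ) • n' := by
      rw [neg_one_smul]; exact sub_eq_add_neg n n'
    rw [h, hφ_addr, hφ_smulr]; ring
  have hφ_subl : ∀ m m' n : M, φ (m - m') n = φ m n - φ m' n := by
    intro m m' n
    have h : m - m' = m + (-1 : ℂ) • m' := by
      rw [neg_one_smul]; exact sub_eq_add_neg m m'
    rw [h, hφ_addl, hφ_smull]; ring
  have hX : ∀ m : M, (ι (qf B) v₁ * ι (qf B) v₂
      - algebraMap ℂ (CliffordAlgebra (qf B)) (B v₁ v₂)) • m
      = ι (qf B) v₁ • (ι (qf B) v₂ • m) - (B v₁ v₂) • m := by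
    intro m
    rw [sub_smul, mul_smul, algebraMap_smul]
  have key : ∀ (x y : V) (m : M), ι (qf B) x • (ι (qf B) y • m)
      = (2 * B x y) • m - ι (qf B) y • (ι (qf B) x • m) := by
    intro x y m
    have h1 : ι (qf B) x * ι (qf B) y + ι (qf B) y * ι (qf B) x
        = algebraMap ℂ (CliffordAlgebra (qf B)) (2 * B x y) := by
      rw [CliffordAlgebra.ι_mul_ι_add_swap]
      congr 1
      have hp := LinearMap.BilinMap.polar_toQuadraticMap (B := B) x y
      rw [qf] at *
      rw [hp, hB_symm y x]; ring
    have h2 : (ι (qf B) x * ι (qf B) y + ι (qf B) y * ι (qf B) x) • m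
        = (2 * B x y) • m := by rw [h1, algebraMap_smul]
    rw [add_smul, mul_smul, mul_smul] at h2
    rw [eq_sub_iff_add_eq]; exact h2
  have hcomm : ∀ (c : ℂ) (x : V) (m : M),
      ι (qf B) x • (c • m) = c • (ι (qf B) x • m) := by
    intro c x m
    rw [← algebraMap_smul (CliffordAlgebra (qf B)) c m, ← mul_smul,
      ← Algebra.commutes, mul_smul, algebraMap_smul]
  have ext : ∀ a b : V, (∀ w : V, B w a = B w b) → a = b := by
    intro a b h
    have h0 : ∀ w : V, B (a - b) w = 0 := by
      intro w
      rw [map_sub, LinearMap.sub_apply, hB_symm a w, hB_symm b w, h w, sub_self]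
    exact sub_eq_zero.mp (hB_nondeg (a - b) h0)
  apply ext
  intro w
  have T1 : B w (Γ Q₁ ((ι (qf B) v₁ * ι (qf B) v₂
        - algebraMap ℂ (CliffordAlgebra (qf B)) (B v₁ v₂)) • Q₂))
      = 2 * B v₁ w * B v₂ G - 2 * B v₂ w * B v₁ G
        + φ (ι (qf B) w • (ι (qf B) v₂ • (ι (qf B) v₁ • Q₁))) Q₂
        - B v₁ v₂ * φ (ι (qf B) w • Q₁) Q₂ := by
    rw [hΓ_def, hX, hφ_subr, hφ_smulr, ← hφ_move v₁, ← hφ_move v₂,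
      key v₁ w Q₁, smul_sub, hcomm, key v₂ w (ι (qf B) v₁ • Q₁),
      hφ_subl, hφ_subl, hφ_smull, hφ_smull, ← hΓ_def, ← hΓ_def]
    ring
  have T2 : B w (Γ Q₂ ((ι (qf B) v₁ * ι (qf B) v₂
        - algebraMap ℂ (CliffordAlgebra (qf B)) (B v₁ v₂)) • Q₁))
      = φ (ι (qf B) w • (ι (qf B) v₁ • (ι (qf B) v₂ • Q₁))) Q₂
        - B v₁ v₂ * φ (ι (qf B) w • Q₁) Q₂ := by
    rw [hΓ_def, hX, hφ_subr, hφ_smulr, ← hφ_move v₁, hφ_symm v₁,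
      ← hφ_move w, hφ_symm w Q₂ Q₁]
  have T3 : φ (ι (qf B) w • (ι (qf B) v₂ • (ι (qf B) v₁ • Q₁))) Q₂
      + φ (ι (qf B) w • (ι (qf B) v₁ • (ι (qf B) v₂ • Q₁))) Q₂
      = 2 * B v₁ v₂ * φ (ι (qf B) w • Q₁) Q₂ := by
    rw [key v₁ v₂ Q₁, smul_sub, hcomm, hφ_subl, hφ_smull]
    ring
  rw [map_add, T1, T2, map_smul, map_sub, map_smul, map_smul, hB_symm v₁ w,
    hB_symm v₂ w, hB_symm v₂ G, hB_symm v₁ G]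
  have : φ (ι (qf B) w • (ι (qf B) v₂ • (ι (qf B) v₁ • Q₁))) Q₂
      = 2 * B v₁ v₂ * φ (ι (qf B) w • Q₁) Q₂
        - φ (ι (qf B) w • (ι (qf B) v₁ • (ι (qf B) v₂ • Q₁))) Q₂ := by
    rw [eq_sub_iff_add_eq]; exact T3
  rw [this]
  simp only [smul_eq_mul]
  ring

end Stmt14
end
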